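/- Let u be a reduced eigenfunction for (c, μ, λ), where (α,β) ⊆ (0,H) is a well for c with threshold c₁ and c_m μ² ≤ λ < c₁ μ². Set ξ = √(2(μ² − λ/c₁)) and w = u². Then for every y ∈ [0,H] \ (α,β), one has w(y) ≤ S · (λ/ξ) · exp(−ξ · dist(y,(α,β))) · ∫_α^β w(z) dz, where S = sup_{y'∈(α,β)} |(c₁ − c(y'))/(c₁ c(y'))| and dist(y,(α,β)) is the distance from y to the interval (α,β). -/

import Mathlib

open Set MeasureTheory Filter

lemma fubini_triangle {a b : ℝ} {F G : ℝ → ℝ}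
    (hF : IntegrableOn F (Ioc a b)) (hG : IntegrableOn G (Ioc a b)) :
    ∫ s in Ioc a b, F s * (∫ t in Ioc s b, G t) =
      ∫ t in Ioc a b, (∫ s in Ioc a t, F s) * G t := by
  set μ := volume.restrict (Ioc a b) with hμ
  set K : ℝ × ℝ → ℝ := ({p : ℝ × ℝ | p.1 ≤ p.2}).indicator (fun p => F p.1 * G p.2) with hK
  have hmeasle : MeasurableSet {p : ℝ × ℝ | p.1 ≤ p.2} :=
    measurableSet_le measurable_fst measurable_snd
  have hprod : Integrable (fun p : ℝ × ℝ => F p.1 * G p.2) (μ.prod μ) :=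
    hF.mul_prod hG
  have hKint : Integrable K (μ.prod μ) := hprod.indicator hmeasle
  have hswap : ∫ s, (∫ t, K (s, t) ∂μ) ∂μ = ∫ t, (∫ s, K (s, t) ∂μ) ∂μ :=
    integral_integral_swap (f := fun s t => K (s, t)) hKint
  have hleft : ∀ s ∈ Ioc a b, (∫ t, K (s, t) ∂μ) = F s * ∫ t in Ioc s b, G t := by
    intro s hs
    have h1 : (fun t => K (s, t)) = (Ici s).indicator (fun t => F s * G t) := by
      funext t
      by_cases h : s ≤ t
      · simp [hK, Set.indicator_of_mem, h, Set.mem_setOf_eq, Set.mem_Ici]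
      · simp [hK, Set.indicator_of_notMem, h, Set.mem_setOf_eq, Set.mem_Ici]
    rw [h1, integral_indicator measurableSet_Ici, hμ, Measure.restrict_restrict measurableSet_Ici]
    have h2 : Ici s ∩ Ioc a b = Icc s b := by
      ext t; simp only [mem_inter_iff, mem_Ici, mem_Ioc, mem_Icc]
      constructor
      · rintro ⟨h1, h2, h3⟩; exact ⟨h1, h3⟩
      · rintro ⟨h1, h2⟩; exact ⟨h1, lt_of_lt_of_le hs.1 h1, h2⟩
    rw [h2, integral_Icc_eq_integral_Ioc, integral_const_mul]
  have hright : ∀ t ∈ Ioc a b, (∫ s, K (s, t) ∂μ) = (∫ s in Ioc a t, F s) * G t := by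
    intro t ht
    have h1 : (fun s => K (s, t)) = (Iic t).indicator (fun s => F s * G t) := by
      funext s
      by_cases h : s ≤ t
      · simp [hK, Set.indicator_of_mem, h, Set.mem_setOf_eq, Set.mem_Iic]
      · simp [hK, Set.indicator_of_notMem, h, Set.mem_setOf_eq, Set.mem_Iic]
    rw [h1, integral_indicator measurableSet_Iic, hμ, Measure.restrict_restrict measurableSet_Iic]
    have h2 : Iic t ∩ Ioc a b = Ioc a t := by
      ext s; simp only [mem_inter_iff, mem_Iic, mem_Ioc]
      constructor
      · rintro ⟨h1, h2, h3⟩; exact ⟨h2, h1⟩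
      · rintro ⟨h1, h2⟩; exact ⟨h2, h1, le_trans h2 ht.2⟩
    rw [h2, integral_mul_const]
  calc ∫ s in Ioc a b, F s * (∫ t in Ioc s b, G t)
      = ∫ s, (∫ t, K (s, t) ∂μ) ∂μ :=
        (setIntegral_congr_fun measurableSet_Ioc (fun s hs => (hleft s hs).symm))
    _ = ∫ t, (∫ s, K (s, t) ∂μ) ∂μ := hswap
    _ = ∫ t in Ioc a b, (∫ s in Ioc a t, F s) * G t :=
        setIntegral_congr_fun measurableSet_Ioc (fun t ht => hright t ht)


lemma key_ibp {H : ℝ} {u u' f : ℝ → ℝ} {a b : ℝ}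
    (h0a : 0 ≤ a) (hab : a ≤ b) (hbH : b ≤ H)
    (hderiv : ∀ y ∈ Icc (0:ℝ) H, HasDerivWithinAt u (u' y) (Icc (0:ℝ) H) y)
    (hcontu' : ContinuousOn u' (Icc (0:ℝ) H))
    (hf : IntegrableOn f (Icc (0:ℝ) H))
    (hfu : IntegrableOn (fun t => f t * u t) (Icc (0:ℝ) H))
    (heq : ∀ y ∈ Icc (0:ℝ) H, u' y = u' 0 - ∫ t in (0:ℝ)..y, f t) :
    ∫ t in a..b, f t * u t
      = u a * u' a - u b * u' b + ∫ t in a..b, (u' t) ^ 2 := by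
  have hsub : Icc a b ⊆ Icc (0:ℝ) H := Icc_subset_Icc h0a hbH
  have hsub' : Ioc a b ⊆ Icc (0:ℝ) H := Ioc_subset_Icc_self.trans hsub
  have hcontu : ContinuousOn u (Icc (0:ℝ) H) :=
    fun y hy => (hderiv y hy).continuousWithinAt
  -- FTC for u on subintervals [s, b]
  have hFTC : ∀ s ∈ Icc a b, ∫ t in s..b, u' t = u b - u s := by
    intro s hs
    refine intervalIntegral.integral_eq_sub_of_hasDeriv_right_of_le hs.2
      (hcontu.mono (Icc_subset_Icc (h0a.trans hs.1) hbH)) (fun x hx => ?_)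
      ((hcontu'.mono (Icc_subset_Icc (h0a.trans hs.1) hbH)).intervalIntegrable_of_Icc hs.2)
    have hxmem : x ∈ Icc (0:ℝ) H := ⟨(h0a.trans hs.1).trans hx.1.le, hx.2.le.trans hbH⟩
    exact (((hderiv x hxmem).hasDerivAt
      (Icc_mem_nhds (lt_of_le_of_lt (h0a.trans hs.1) hx.1) (lt_of_lt_of_le hx.2 hbH))).hasDerivWithinAt)
  -- u' increments
  have hu'ab : ∀ z ∈ Icc (0:ℝ) H, u' z = u' a - ∫ t in a..z, f t := by
    intro z hz
    have ha' : a ∈ Icc (0:ℝ) H := ⟨h0a, hab.trans hbH⟩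
    have h1 := heq z hz
    have h2 := heq a ha'
    have hint : ∀ y ∈ Icc (0:ℝ) H, IntervalIntegrable f volume 0 y := by
      intro y hy
      rw [intervalIntegrable_iff_integrableOn_Icc_of_le hy.1]
      exact hf.mono_set (Icc_subset_Icc le_rfl hy.2)
    have h3 : (∫ t in (0:ℝ)..z, f t) - ∫ t in (0:ℝ)..a, f t = ∫ t in a..z, f t :=
      intervalIntegral.integral_interval_sub_left (hint z hz) (hint a ha')
    rw [h1, h2, ← h3]; ring
  have hfi : IntegrableOn f (Ioc a b) := hf.mono_set hsub'
  have hfui : IntegrableOn (fun t => f t * u t) (Ioc a b) := hfu.mono_set hsub'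
  have hu'i : IntegrableOn u' (Ioc a b) :=
    ((hcontu'.mono hsub).integrableOn_Icc).mono_set Ioc_subset_Icc_self
  -- the double integral
  have hfub := fubini_triangle hfi hu'i
  -- left side of fubini
  have hL : ∫ s in Ioc a b, f s * (∫ t in Ioc s b, u' t)
      = (∫ s in Ioc a b, f s) * u b - ∫ s in Ioc a b, f s * u s := by
    have h1 : ∀ s ∈ Ioc a b, f s * (∫ t in Ioc s b, u' t) = f s * u b - f s * u s := by
      intro s hs
      rw [← intervalIntegral.integral_of_le hs.2, hFTC s (Ioc_subset_Icc_self hs)]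
      ring
    rw [setIntegral_congr_fun measurableSet_Ioc h1,
      integral_sub (hfi.mul_const _) hfui, integral_mul_const]
  -- right side of fubini
  have hR : ∫ t in Ioc a b, (∫ s in Ioc a t, f s) * u' t
      = u' a * (u b - u a) - ∫ t in Ioc a b, (u' t) ^ 2 := by
    have h1 : ∀ t ∈ Ioc a b, (∫ s in Ioc a t, f s) * u' t
        = u' a * u' t - (u' t) ^ 2 := by
      intro t ht
      have : (∫ s in Ioc a t, f s) = u' a - u' t := by
        rw [← intervalIntegral.integral_of_le ht.1.le]
        have := hu'ab t (hsub' ht)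
        linarith [this]
      rw [this]; ring
    rw [setIntegral_congr_fun measurableSet_Ioc h1,
      integral_sub (((hcontu'.mono hsub).integrableOn_Icc.mono_set Ioc_subset_Icc_self).const_mul _)
        (by
          have : ContinuousOn (fun t => (u' t) ^ 2) (Icc a b) := (hcontu'.mono hsub).pow 2
          exact this.integrableOn_Icc.mono_set Ioc_subset_Icc_self),
      integral_const_mul, ← intervalIntegral.integral_of_le hab, hFTC a ⟨le_rfl, hab⟩]
  -- ∫ f over [a,b]
  have hfint : (∫ s in Ioc a b, f s) = u' a - u' b := by
    rw [← intervalIntegral.integral_of_le hab]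
    have := hu'ab b ⟨h0a.trans hab, hbH⟩
    linarith [this]
  rw [intervalIntegral.integral_of_le hab, intervalIntegral.integral_of_le hab]
  have := hL.symm.trans (hfub.trans hR)
  rw [hfint] at this
  linarith [this]



/-- `u` (with derivative `u'`) is a reduced eigenfunction for `(c, μ, lam)` on `[0,H]`:
a nontrivial C¹ Carathéodory solution of `c u'' + (lam - c μ²) u = 0` with Dirichlet
boundary conditions. -/
def ReducedEigenfunction (H : ℝ) (c : ℝ → ℝ) (μ lam : ℝ) (u u' : ℝ → ℝ) : Prop :=
  (∀ y ∈ Set.Icc (0:ℝ) H, HasDerivWithinAt u (u' y) (Set.Icc (0:ℝ) H) y) ∧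
  ContinuousOn u' (Set.Icc (0:ℝ) H) ∧
  (∀ y ∈ Set.Icc (0:ℝ) H, u' y = u' 0 - ∫ t in (0:ℝ)..y, (lam / c t - μ ^ 2) * u t) ∧
  (∃ y ∈ Set.Icc (0:ℝ) H, u y ≠ 0) ∧
  u 0 = 0 ∧ u H = 0

set_option maxHeartbeats 4000000 in
theorem stmt0
    (H c_m c_M c₁ α β μ lam : ℝ) (c u u' : ℝ → ℝ)
    (hH : 0 < H) (hcm : 0 < c_m) (hcmM : c_m ≤ c_M)
    (hmeas : Measurable c)
    (hbounds : ∀ y ∈ Set.Icc (0:ℝ) H, c_m ≤ c y ∧ c y ≤ c_M)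
    (hc₁m : c_m < c₁) (hc₁M : c₁ ≤ c_M)
    (hα : 0 ≤ α) (hαβ : α < β) (hβ : β ≤ H)
    (hwell : ∀ᵐ y ∂(MeasureTheory.volume.restrict (Set.Ioo (0:ℝ) H \ Set.Ioo α β)),
      c₁ ≤ c y)
    (hμ : 0 < μ)
    (hlam₁ : c_m * μ ^ 2 ≤ lam) (hlam₂ : lam < c₁ * μ ^ 2)
    (hu : ReducedEigenfunction H c μ lam u u') :
    ∀ y ∈ Set.Icc (0:ℝ) H \ Set.Ioo α β,
      (u y) ^ 2 ≤
        (sSup ((fun y' => |(c₁ - c y') / (c₁ * c y')|) '' Set.Ioo α β)) *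
          (lam / Real.sqrt (2 * (μ ^ 2 - lam / c₁))) *
          Real.exp (-(Real.sqrt (2 * (μ ^ 2 - lam / c₁))) * Metric.infDist y (Set.Ioo α β)) *
          ∫ z in α..β, (u z) ^ 2 := by

  obtain ⟨hderiv, hcontu', heq, -, hu0, huH⟩ := hu
  have hc₁pos : (0:ℝ) < c₁ := hcm.trans hc₁m
  have hlam_pos : (0:ℝ) < lam := lt_of_lt_of_le (by positivity) hlam₁
  have hgap : 0 < μ ^ 2 - lam / c₁ := by
    rw [sub_pos, div_lt_iff₀ hc₁pos]; linarith
  set κ : ℝ := Real.sqrt (μ ^ 2 - lam / c₁) with hκdef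
  have hκpos : 0 < κ := Real.sqrt_pos.mpr hgap
  have hκ2 : κ ^ 2 = μ ^ 2 - lam / c₁ := Real.sq_sqrt hgap.le
  set ξ : ℝ := Real.sqrt (2 * (μ ^ 2 - lam / c₁)) with hξdef
  have hξ : ξ = Real.sqrt 2 * κ := by
    rw [hξdef, hκdef, Real.sqrt_mul (by norm_num)]
  have hξpos : 0 < ξ := by
    rw [hξ]; positivity
  have hξle : ξ ≤ 2 * κ := by
    rw [hξ]
    have h2 : Real.sqrt 2 ≤ 2 := by
      nlinarith [Real.sq_sqrt (show (0:ℝ) ≤ 2 by norm_num), Real.sqrt_nonneg 2]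
    nlinarith
  have hcontu : ContinuousOn u (Icc (0:ℝ) H) := fun y hy => (hderiv y hy).continuousWithinAt
  have hupg : ∀ x ∈ Ioo (0:ℝ) H, HasDerivAt u (u' x) x := fun x hx =>
    (hderiv x (Ioo_subset_Icc_self hx)).hasDerivAt (Icc_mem_nhds hx.1 hx.2)
  have hβ0 : (0:ℝ) ≤ β := hα.trans hαβ.le
  have hαH : α ≤ H := hαβ.le.trans hβ
  -- integrability of (lam/c - μ²) * φ for continuous φ
  have hgen : ∀ φ : ℝ → ℝ, ContinuousOn φ (Icc (0:ℝ) H) →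
      IntegrableOn (fun t => (lam / c t - μ ^ 2) * φ t) (Icc (0:ℝ) H) := by
    intro φ hφ
    obtain ⟨Cφ, hCφ⟩ := isCompact_Icc.exists_bound_of_continuousOn hφ
    have hCφ0 : 0 ≤ Cφ := le_trans (norm_nonneg _) (hCφ 0 ⟨le_rfl, hH.le⟩)
    have hmeas1 : AEStronglyMeasurable (fun t => lam / c t - μ ^ 2)
        (volume.restrict (Icc (0:ℝ) H)) :=
      ((measurable_const.div hmeas).sub measurable_const).aestronglyMeasurable
    have hφm : AEStronglyMeasurable φ (volume.restrict (Icc (0:ℝ) H)) :=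
      hφ.aestronglyMeasurable measurableSet_Icc
    refine Integrable.mono' (g := fun _ => (lam / c_m + μ ^ 2) * Cφ)
      (integrable_const _) (hmeas1.mul hφm) ?_
    rw [ae_restrict_iff' measurableSet_Icc]
    refine ae_of_all _ (fun t ht => ?_)
    have hct := hbounds t ht
    have hct0 : 0 < c t := hcm.trans_le hct.1
    have h1 : lam / c t ≤ lam / c_m := div_le_div_of_nonneg_left hlam_pos.le hcm hct.1
    have h2 : 0 ≤ lam / c t := by positivity
    have h3 : |lam / c t - μ ^ 2| ≤ lam / c_m + μ ^ 2 := by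
      rw [abs_le]; constructor <;> nlinarith [sq_nonneg μ]
    rw [norm_mul]
    exact mul_le_mul h3 (hCφ t ht) (norm_nonneg _) (by positivity)
  have hf_int : IntegrableOn (fun t => (lam / c t - μ ^ 2) * u t) (Icc (0:ℝ) H) :=
    hgen u hcontu
  have hfu_int : IntegrableOn (fun t => ((lam / c t - μ ^ 2) * u t) * u t) (Icc (0:ℝ) H) := by
    have h1 := hgen (fun t => u t ^ 2) (hcontu.pow 2)
    have h2 : (fun t => ((lam / c t - μ ^ 2) * u t) * u t)
        = fun t => (lam / c t - μ ^ 2) * (u t ^ 2) := funext fun t => by ring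
    rw [h2]; exact h1
  -- the key integration by parts identity
  have hstar : ∀ a b : ℝ, 0 ≤ a → a ≤ b → b ≤ H →
      ∫ t in a..b, ((lam / c t - μ ^ 2) * u t) * u t
        = u a * u' a - u b * u' b + ∫ t in a..b, (u' t) ^ 2 :=
    fun a b h1 h2 h3 => key_ibp h1 h2 h3 hderiv hcontu' hf_int hfu_int heq
  -- FTC for u * u'
  have hUU' : ∀ a b : ℝ, 0 ≤ a → a ≤ b → b ≤ H →
      ∫ t in a..b, u t * u' t = u b ^ 2 / 2 - u a ^ 2 / 2 := by
    intro a b h0a hab hbH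
    refine intervalIntegral.integral_eq_sub_of_hasDeriv_right_of_le hab
      (((hcontu.mono (Icc_subset_Icc h0a hbH)).pow 2).div_const 2) (fun x hx => ?_)
      (((hcontu.mono (Icc_subset_Icc h0a hbH)).mul
        (hcontu'.mono (Icc_subset_Icc h0a hbH))).intervalIntegrable_of_Icc hab)
    have hx' : x ∈ Ioo (0:ℝ) H := ⟨h0a.trans_lt hx.1, hx.2.trans_le hbH⟩
    have h := ((hupg x hx').pow 2).div_const 2
    have : HasDerivAt (fun y => u y ^ 2 / 2) (u x * u' x) x := by
      refine h.congr_deriv ?_; norm_num; ring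
    exact this.hasDerivWithinAt
  -- AM-GM integral bound
  have hAMGM : ∀ a b : ℝ, 0 ≤ a → a ≤ b → b ≤ H →
      2 * κ * |∫ t in a..b, u t * u' t|
        ≤ (∫ t in a..b, (u' t) ^ 2) + κ ^ 2 * ∫ t in a..b, (u t) ^ 2 := by
    intro a b h0a hab hbH
    have hsub : Icc a b ⊆ Icc (0:ℝ) H := Icc_subset_Icc h0a hbH
    have hi1 : IntervalIntegrable (fun t => |u t * u' t|) volume a b :=
      (((hcontu.mono hsub).mul (hcontu'.mono hsub)).abs).intervalIntegrable_of_Icc hab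
    have hi2 : IntervalIntegrable (fun t => (u' t) ^ 2 + κ ^ 2 * (u t) ^ 2) volume a b :=
      (((hcontu'.mono hsub).pow 2).add (continuousOn_const.mul ((hcontu.mono hsub).pow 2))).intervalIntegrable_of_Icc hab
    have h1 : |∫ t in a..b, u t * u' t| ≤ ∫ t in a..b, |u t * u' t| :=
      intervalIntegral.abs_integral_le_integral_abs hab
    have h2 : ∫ t in a..b, 2 * κ * |u t * u' t|
        ≤ ∫ t in a..b, ((u' t) ^ 2 + κ ^ 2 * (u t) ^ 2) := by
      refine intervalIntegral.integral_mono_on hab (hi1.const_mul _) hi2 (fun t ht => ?_)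
      have h3 := sq_nonneg (|u' t| - κ * |u t|)
      have h4 : |u t * u' t| = |u t| * |u' t| := abs_mul _ _
      nlinarith [sq_abs (u t), sq_abs (u' t), abs_nonneg (u t), abs_nonneg (u' t)]
    rw [intervalIntegral.integral_const_mul] at h2
    rw [intervalIntegral.integral_add (f := fun t => (u' t) ^ 2) (g := fun t => κ ^ 2 * (u t) ^ 2)
      (((hcontu'.mono hsub).pow 2).intervalIntegrable_of_Icc hab)
      ((continuousOn_const.mul ((hcontu.mono hsub).pow 2)).intervalIntegrable_of_Icc hab),
      intervalIntegral.integral_const_mul] at h2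
    have h5 : 2 * κ * |∫ t in a..b, u t * u' t| ≤ 2 * κ * ∫ t in a..b, |u t * u' t| := by
      apply mul_le_mul_of_nonneg_left h1 (by positivity)
    linarith

  -- a.e. lower bound on c outside the well
  have hc_ae : ∀ᵐ t ∂(volume : Measure ℝ), t ∈ Ioo (0:ℝ) H \ Ioo α β → c₁ ≤ c t :=
    (ae_restrict_iff' (measurableSet_Ioo.diff measurableSet_Ioo)).mp hwell
  have hneq_ae : ∀ b₀ : ℝ, ∀ᵐ t ∂(volume : Measure ℝ), t ≠ b₀ := by
    intro b₀
    have h0 : (volume : Measure ℝ) {b₀} = 0 := Real.volume_singleton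
    rw [ae_iff]
    convert h0 using 2
    ext t; simp
  -- right region: ∫ f u ≤ -κ² ∫ u²
  have h7R : ∀ y, β ≤ y → y ≤ H →
      ∫ t in y..H, ((lam / c t - μ ^ 2) * u t) * u t
        ≤ -κ ^ 2 * ∫ t in y..H, (u t) ^ 2 := by
    intro y hy1 hy2
    have hsub : Icc y H ⊆ Icc (0:ℝ) H := Icc_subset_Icc (hβ0.trans hy1) le_rfl
    have hint1 : IntegrableOn (fun t => ((lam / c t - μ ^ 2) * u t) * u t) (Ioc y H) :=
      hfu_int.mono_set (Ioc_subset_Icc_self.trans hsub)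
    have hint2 : IntegrableOn (fun t => -κ ^ 2 * (u t) ^ 2) (Ioc y H) :=
      ((continuousOn_const.mul ((hcontu.mono hsub).pow 2)).integrableOn_Icc).mono_set
        Ioc_subset_Icc_self
    have hae : ∀ᵐ t ∂(volume.restrict (Ioc y H)),
        ((lam / c t - μ ^ 2) * u t) * u t ≤ -κ ^ 2 * (u t) ^ 2 := by
      filter_upwards [ae_restrict_mem measurableSet_Ioc, ae_restrict_of_ae hc_ae,
        ae_restrict_of_ae (hneq_ae H)] with t ht hct htH
      have htm : t ∈ Ioo (0:ℝ) H \ Ioo α β := by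
        constructor
        · exact ⟨lt_of_le_of_lt (hβ0.trans hy1) ht.1, lt_of_le_of_ne ht.2 htH⟩
        · intro hmem
          exact absurd hmem.2 (not_lt.mpr (hy1.trans ht.1.le))
      have hc := hct htm
      have h5 : lam / c t ≤ lam / c₁ := div_le_div_of_nonneg_left hlam_pos.le hc₁pos hc
      nlinarith [sq_nonneg (u t)]
    calc ∫ t in y..H, ((lam / c t - μ ^ 2) * u t) * u t
        = ∫ t in Ioc y H, ((lam / c t - μ ^ 2) * u t) * u t :=
          intervalIntegral.integral_of_le hy2
      _ ≤ ∫ t in Ioc y H, -κ ^ 2 * (u t) ^ 2 := integral_mono_ae hint1 hint2 hae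
      _ = -κ ^ 2 * ∫ t in Ioc y H, (u t) ^ 2 := integral_const_mul _ _
      _ = -κ ^ 2 * ∫ t in y..H, (u t) ^ 2 := by
          rw [intervalIntegral.integral_of_le hy2]
  -- left region
  have h7L : ∀ y, 0 ≤ y → y ≤ α →
      ∫ t in (0:ℝ)..y, ((lam / c t - μ ^ 2) * u t) * u t
        ≤ -κ ^ 2 * ∫ t in (0:ℝ)..y, (u t) ^ 2 := by
    intro y hy1 hy2
    have hyH : y ≤ H := hy2.trans hαH
    have hsub : Icc (0:ℝ) y ⊆ Icc (0:ℝ) H := Icc_subset_Icc le_rfl hyH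
    have hint1 : IntegrableOn (fun t => ((lam / c t - μ ^ 2) * u t) * u t) (Ioc 0 y) :=
      hfu_int.mono_set (Ioc_subset_Icc_self.trans hsub)
    have hint2 : IntegrableOn (fun t => -κ ^ 2 * (u t) ^ 2) (Ioc 0 y) :=
      ((continuousOn_const.mul ((hcontu.mono hsub).pow 2)).integrableOn_Icc).mono_set
        Ioc_subset_Icc_self
    have hae : ∀ᵐ t ∂(volume.restrict (Ioc (0:ℝ) y)),
        ((lam / c t - μ ^ 2) * u t) * u t ≤ -κ ^ 2 * (u t) ^ 2 := by
      filter_upwards [ae_restrict_mem measurableSet_Ioc, ae_restrict_of_ae hc_ae]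
        with t ht hct
      have htm : t ∈ Ioo (0:ℝ) H \ Ioo α β := by
        constructor
        · exact ⟨ht.1, lt_of_le_of_lt (ht.2.trans hy2) (lt_of_lt_of_le hαβ hβ)⟩
        · intro hmem
          exact absurd hmem.1 (not_lt.mpr (ht.2.trans hy2))
      have hc := hct htm
      have h5 : lam / c t ≤ lam / c₁ := div_le_div_of_nonneg_left hlam_pos.le hc₁pos hc
      nlinarith [sq_nonneg (u t)]
    calc ∫ t in (0:ℝ)..y, ((lam / c t - μ ^ 2) * u t) * u t
        = ∫ t in Ioc (0:ℝ) y, ((lam / c t - μ ^ 2) * u t) * u t :=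
          intervalIntegral.integral_of_le hy1
      _ ≤ ∫ t in Ioc (0:ℝ) y, -κ ^ 2 * (u t) ^ 2 := integral_mono_ae hint1 hint2 hae
      _ = -κ ^ 2 * ∫ t in Ioc (0:ℝ) y, (u t) ^ 2 := integral_const_mul _ _
      _ = -κ ^ 2 * ∫ t in (0:ℝ)..y, (u t) ^ 2 := by
          rw [intervalIntegral.integral_of_le hy1]
  -- pointwise differential inequality, right of the well
  have hA : ∀ y ∈ Icc β H, u y * u' y ≤ -κ * (u y) ^ 2 := by
    intro y hy
    have h0y : (0:ℝ) ≤ y := hβ0.trans hy.1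
    have h1 : ∫ t in y..H, ((lam / c t - μ ^ 2) * u t) * u t
        = u y * u' y + ∫ t in y..H, (u' t) ^ 2 := by
      rw [hstar y H h0y hy.2 le_rfl, huH]; ring
    have h2 := h7R y hy.1 hy.2
    have h3 := hAMGM y H h0y hy.2 le_rfl
    rw [hUU' y H h0y hy.2 le_rfl, huH] at h3
    have h5 : |(0:ℝ) ^ 2 / 2 - u y ^ 2 / 2| = u y ^ 2 / 2 := by
      rw [show (0:ℝ) ^ 2 / 2 - u y ^ 2 / 2 = -(u y ^ 2 / 2) by ring, abs_neg,
        abs_of_nonneg (by positivity)]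
    rw [h5] at h3
    have hI2 : 0 ≤ ∫ t in y..H, (u t) ^ 2 :=
      intervalIntegral.integral_nonneg hy.2 (fun t _ => sq_nonneg _)
    nlinarith
  -- pointwise differential inequality, left of the well
  have hA' : ∀ y ∈ Icc (0:ℝ) α, κ * (u y) ^ 2 ≤ u y * u' y := by
    intro y hy
    have hyH : y ≤ H := hy.2.trans hαH
    have h1 : ∫ t in (0:ℝ)..y, ((lam / c t - μ ^ 2) * u t) * u t
        = -(u y * u' y) + ∫ t in (0:ℝ)..y, (u' t) ^ 2 := by
      rw [hstar 0 y le_rfl hy.1 hyH, hu0]; ring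
    have h2 := h7L y hy.1 hy.2
    have h3 := hAMGM 0 y le_rfl hy.1 hyH
    rw [hUU' 0 y le_rfl hy.1 hyH, hu0] at h3
    have h5 : |u y ^ 2 / 2 - (0:ℝ) ^ 2 / 2| = u y ^ 2 / 2 := by
      rw [show u y ^ 2 / 2 - (0:ℝ) ^ 2 / 2 = u y ^ 2 / 2 by ring,
        abs_of_nonneg (by positivity)]
    rw [h5] at h3
    have hI2 : 0 ≤ ∫ t in (0:ℝ)..y, (u t) ^ 2 :=
      intervalIntegral.integral_nonneg hy.1 (fun t _ => sq_nonneg _)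
    nlinarith
  -- the supremum S and the well integral I
  set S : ℝ := sSup ((fun y' => |(c₁ - c y') / (c₁ * c y')|) '' Ioo α β) with hSdef
  set I : ℝ := ∫ z in α..β, (u z) ^ 2 with hIdef
  have hI0 : 0 ≤ I := intervalIntegral.integral_nonneg hαβ.le (fun t _ => sq_nonneg _)
  have hbddS : BddAbove ((fun y' => |(c₁ - c y') / (c₁ * c y')|) '' Ioo α β) := by
    refine ⟨(c₁ + c_M) / (c₁ * c_m), ?_⟩
    rintro x ⟨t, ht, rfl⟩
    have htI : t ∈ Icc (0:ℝ) H := ⟨hα.trans ht.1.le, ht.2.le.trans hβ⟩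
    have hct := hbounds t htI
    have h0 : 0 < c t := hcm.trans_le hct.1
    show |(c₁ - c t) / (c₁ * c t)| ≤ (c₁ + c_M) / (c₁ * c_m)
    rw [abs_div, abs_of_pos (mul_pos hc₁pos h0)]
    refine div_le_div₀ (by linarith) ?_ (mul_pos hc₁pos hcm)
      (mul_le_mul_of_nonneg_left hct.1 hc₁pos.le)
    rw [abs_le]; constructor <;> nlinarith
  have hSb : ∀ t ∈ Ioo α β, |(c₁ - c t) / (c₁ * c t)| ≤ S :=
    fun t ht => le_csSup hbddS ⟨t, ht, rfl⟩
  have hS0 : 0 ≤ S := by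
    have ht₀ : (α + β) / 2 ∈ Ioo α β := ⟨by linarith, by linarith⟩
    exact le_trans (abs_nonneg _) (hSb _ ht₀)
  -- the well estimate
  have hwb : ∫ t in α..β, ((lam / c t - μ ^ 2) * u t) * u t ≤ (lam * S - κ ^ 2) * I := by
    have hsub : Icc α β ⊆ Icc (0:ℝ) H := Icc_subset_Icc hα hβ
    have hint1 : IntegrableOn (fun t => ((lam / c t - μ ^ 2) * u t) * u t) (Ioc α β) :=
      hfu_int.mono_set (Ioc_subset_Icc_self.trans hsub)
    have hint2 : IntegrableOn (fun t => (lam * S - κ ^ 2) * (u t) ^ 2) (Ioc α β) :=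
      ((continuousOn_const.mul ((hcontu.mono hsub).pow 2)).integrableOn_Icc).mono_set
        Ioc_subset_Icc_self
    have hae : ∀ᵐ t ∂(volume.restrict (Ioc α β)),
        ((lam / c t - μ ^ 2) * u t) * u t ≤ (lam * S - κ ^ 2) * (u t) ^ 2 := by
      filter_upwards [ae_restrict_mem measurableSet_Ioc, ae_restrict_of_ae (hneq_ae β)]
        with t ht htβ
      have htm : t ∈ Ioo α β := ⟨ht.1, lt_of_le_of_ne ht.2 htβ⟩
      have htI : t ∈ Icc (0:ℝ) H := ⟨hα.trans ht.1.le, ht.2.trans hβ⟩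
      have hct := hbounds t htI
      have h0 : 0 < c t := hcm.trans_le hct.1
      have hq : lam / c t - lam / c₁ ≤ lam * S := by
        have h1 : lam / c t - lam / c₁ = lam * ((c₁ - c t) / (c₁ * c t)) := by
          field_simp
        rw [h1]
        exact mul_le_mul_of_nonneg_left
          (le_trans (le_abs_self _) (hSb t htm)) hlam_pos.le
      nlinarith [sq_nonneg (u t)]
    calc ∫ t in α..β, ((lam / c t - μ ^ 2) * u t) * u t
        = ∫ t in Ioc α β, ((lam / c t - μ ^ 2) * u t) * u t :=
          intervalIntegral.integral_of_le hαβ.le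
      _ ≤ ∫ t in Ioc α β, (lam * S - κ ^ 2) * (u t) ^ 2 := integral_mono_ae hint1 hint2 hae
      _ = (lam * S - κ ^ 2) * ∫ t in Ioc α β, (u t) ^ 2 := integral_const_mul _ _
      _ = (lam * S - κ ^ 2) * I := by
          rw [hIdef, intervalIntegral.integral_of_le hαβ.le]
  -- boundary bounds
  have h9 : 2 * κ * (u β) ^ 2 ≤ lam * S * I ∧ 2 * κ * (u α) ^ 2 ≤ lam * S * I := by
    have h1 := hstar α β hα hαβ.le hβ
    have hAβ := hA β ⟨le_rfl, hβ⟩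
    have hAα := hA' α ⟨hα, le_rfl⟩
    have h3 := hAMGM α β hα hαβ.le hβ
    rw [hUU' α β hα hαβ.le hβ] at h3
    have habs1 : u β ^ 2 / 2 - u α ^ 2 / 2 ≤ |u β ^ 2 / 2 - u α ^ 2 / 2| := le_abs_self _
    have habs2 : -(u β ^ 2 / 2 - u α ^ 2 / 2) ≤ |u β ^ 2 / 2 - u α ^ 2 / 2| := neg_le_abs _
    have hIeq : (∫ t in α..β, (u t) ^ 2) = I := hIdef.symm
    rw [hIeq] at h3
    constructor <;> nlinarith [hwb, h1]
  -- Gronwall, right side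
  have hkey : ∀ p q x₀ y₀ : ℝ, p * Real.exp x₀ ≤ q * Real.exp y₀ →
      p ≤ q * Real.exp (y₀ - x₀) := by
    intro p q x₀ y₀ h
    rw [Real.exp_sub, ← mul_div_assoc, le_div_iff₀ (Real.exp_pos _)]
    exact h
  have hGr : ∀ y ∈ Icc β H, u y ^ 2 ≤ u β ^ 2 * Real.exp (2 * κ * β - 2 * κ * y) := by
    have hg : ∀ x ∈ Ioo β H, HasDerivAt (fun z => u z ^ 2 * Real.exp (2 * κ * z))
        ((2 * u x * u' x + 2 * κ * u x ^ 2) * Real.exp (2 * κ * x)) x := by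
      intro x hx
      have hx' : x ∈ Ioo (0:ℝ) H := ⟨hβ0.trans_lt hx.1, hx.2⟩
      have h1 : HasDerivAt (fun z => u z ^ 2) (2 * u x * u' x) x := by
        have := (hupg x hx').pow 2
        refine this.congr_deriv ?_
        norm_num
      have h2 : HasDerivAt (fun z => Real.exp (2 * κ * z))
          (Real.exp (2 * κ * x) * (2 * κ)) x := by
        refine HasDerivAt.exp ?_
        simpa using (hasDerivAt_id x).const_mul (2 * κ)
      have := h1.mul h2
      refine this.congr_deriv ?_
      ring
    have hanti : AntitoneOn (fun z => u z ^ 2 * Real.exp (2 * κ * z)) (Icc β H) := by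
      apply antitoneOn_of_deriv_nonpos (convex_Icc β H)
      · exact ((hcontu.mono (Icc_subset_Icc hβ0 le_rfl)).pow 2).mul
          (Real.continuous_exp.comp (continuous_const.mul continuous_id)).continuousOn
      · intro x hx
        rw [interior_Icc] at hx
        exact (hg x hx).differentiableAt.differentiableWithinAt
      · intro x hx
        rw [interior_Icc] at hx
        rw [(hg x hx).deriv]
        have hAx := hA x ⟨hx.1.le, hx.2.le⟩
        have hep := Real.exp_pos (2 * κ * x)
        exact mul_nonpos_iff.mpr (Or.inr ⟨by linarith, hep.le⟩)
    intro y hy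
    exact hkey _ _ _ _ (hanti (left_mem_Icc.mpr hβ) hy hy.1)
  -- Gronwall, left side
  have hGrL : ∀ y ∈ Icc (0:ℝ) α, u y ^ 2 ≤ u α ^ 2 * Real.exp (2 * κ * y - 2 * κ * α) := by
    have hg : ∀ x ∈ Ioo (0:ℝ) α, HasDerivAt (fun z => u z ^ 2 * Real.exp (-(2 * κ * z)))
        ((2 * u x * u' x - 2 * κ * u x ^ 2) * Real.exp (-(2 * κ * x))) x := by
      intro x hx
      have hx' : x ∈ Ioo (0:ℝ) H := ⟨hx.1, hx.2.trans_le hαH⟩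
      have h1 : HasDerivAt (fun z => u z ^ 2) (2 * u x * u' x) x := by
        have := (hupg x hx').pow 2
        refine this.congr_deriv ?_
        norm_num
      have h2 : HasDerivAt (fun z => Real.exp (-(2 * κ * z)))
          (Real.exp (-(2 * κ * x)) * (-(2 * κ))) x := by
        refine HasDerivAt.exp ?_
        have := ((hasDerivAt_id x).const_mul (2 * κ)).neg
        exact this.congr_deriv (by simp)
      have := h1.mul h2
      refine this.congr_deriv ?_
      ring
    have hmono : MonotoneOn (fun z => u z ^ 2 * Real.exp (-(2 * κ * z))) (Icc (0:ℝ) α) := by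
      apply monotoneOn_of_deriv_nonneg (convex_Icc 0 α)
      · exact ((hcontu.mono (Icc_subset_Icc le_rfl hαH)).pow 2).mul
          (Real.continuous_exp.comp ((continuous_const.mul continuous_id).neg)).continuousOn
      · intro x hx
        rw [interior_Icc] at hx
        exact (hg x hx).differentiableAt.differentiableWithinAt
      · intro x hx
        rw [interior_Icc] at hx
        rw [(hg x hx).deriv]
        have hAx := hA' x ⟨hx.1.le, hx.2.le⟩
        have hep := Real.exp_pos (-(2 * κ * x))
        exact mul_nonneg (by linarith) hep.le
    intro y hy
    have h6 := hmono hy (right_mem_Icc.mpr hα) hy.2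
    have h7 := hkey _ _ _ _ h6
    rw [show -(2 * κ * α) - -(2 * κ * y) = 2 * κ * y - 2 * κ * α from by ring] at h7
    exact h7
  
  -- final assembly
  intro y hy
  obtain ⟨hy1, hy2⟩ := hy
  have hclos : Metric.infDist y (Ioo α β) = Metric.infDist y (Icc α β) := by
    rw [← Metric.infDist_closure (s := Ioo α β), closure_Ioo hαβ.ne]
  have hcase : y ≤ α ∨ β ≤ y := by
    rcases le_or_gt y α with h | h
    · exact Or.inl h
    rcases le_or_gt β y with h' | h'
    · exact Or.inr h'
    · exact absurd ⟨h, h'⟩ hy2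
  have hLSI : 0 ≤ lam * S * I := mul_nonneg (mul_nonneg hlam_pos.le hS0) hI0
  have hdivle : lam * S * I / (2 * κ) ≤ lam * S * I / ξ :=
    div_le_div_of_nonneg_left hLSI hξpos hξle
  rcases hcase with hc | hc
  · -- left of the well
    have hd : Metric.infDist y (Icc α β) = α - y := by
      apply le_antisymm
      · have h1 := Metric.infDist_le_dist_of_mem (x := y)
          (show α ∈ Icc α β from ⟨le_rfl, hαβ.le⟩)
        rwa [Real.dist_eq, abs_of_nonpos (by linarith), neg_sub] at h1
      · refine not_lt.mp (fun hlt => ?_)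
        obtain ⟨z, hz, hdz⟩ :=
          (Metric.infDist_lt_iff (s := Icc α β) (x := y) ⟨α, le_rfl, hαβ.le⟩).mp hlt
        rw [Real.dist_eq, abs_sub_comm] at hdz
        have h2 : z - y ≤ |z - y| := le_abs_self _
        have h3 : α ≤ z := hz.1
        linarith
    rw [hclos, hd]
    have e1 := hGrL y ⟨hy1.1, hc⟩
    have e2 : u α ^ 2 ≤ lam * S * I / (2 * κ) := by
      rw [le_div_iff₀ (by positivity)]
      linarith [h9.2]
    have e3 : Real.exp (2 * κ * y - 2 * κ * α) ≤ Real.exp (-ξ * (α - y)) := by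
      apply Real.exp_le_exp.mpr
      nlinarith [sub_nonneg.mpr hc]
    calc u y ^ 2 ≤ u α ^ 2 * Real.exp (2 * κ * y - 2 * κ * α) := e1
      _ ≤ lam * S * I / (2 * κ) * Real.exp (-ξ * (α - y)) :=
          mul_le_mul e2 e3 (Real.exp_pos _).le (by positivity)
      _ ≤ lam * S * I / ξ * Real.exp (-ξ * (α - y)) :=
          mul_le_mul_of_nonneg_right hdivle (Real.exp_pos _).le
      _ = S * (lam / ξ) * Real.exp (-ξ * (α - y)) * I := by ring
  · -- right of the well
    have hd : Metric.infDist y (Icc α β) = y - β := by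
      apply le_antisymm
      · have h1 := Metric.infDist_le_dist_of_mem (x := y)
          (show β ∈ Icc α β from ⟨hαβ.le, le_rfl⟩)
        rwa [Real.dist_eq, abs_of_nonneg (by linarith)] at h1
      · refine not_lt.mp (fun hlt => ?_)
        obtain ⟨z, hz, hdz⟩ :=
          (Metric.infDist_lt_iff (s := Icc α β) (x := y) ⟨α, le_rfl, hαβ.le⟩).mp hlt
        rw [Real.dist_eq] at hdz
        have h2 : y - z ≤ |y - z| := le_abs_self _
        have h3 : z ≤ β := hz.2
        linarith
    rw [hclos, hd]
    have e1 := hGr y ⟨hc, hy1.2⟩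
    have e2 : u β ^ 2 ≤ lam * S * I / (2 * κ) := by
      rw [le_div_iff₀ (by positivity)]
      linarith [h9.1]
    have e3 : Real.exp (2 * κ * β - 2 * κ * y) ≤ Real.exp (-ξ * (y - β)) := by
      apply Real.exp_le_exp.mpr
      nlinarith [sub_nonneg.mpr hc]
    calc u y ^ 2 ≤ u β ^ 2 * Real.exp (2 * κ * β - 2 * κ * y) := e1
      _ ≤ lam * S * I / (2 * κ) * Real.exp (-ξ * (y - β)) :=
          mul_le_mul e2 e3 (Real.exp_pos _).le (by positivity)
      _ ≤ lam * S * I / ξ * Real.exp (-ξ * (y - β)) :=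
          mul_le_mul_of_nonneg_right hdivle (Real.exp_pos _).le
      _ = S * (lam / ξ) * Real.exp (-ξ * (y - β)) * I := by ring
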